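/- Let ψ : (0,∞) → ℝ be measurable with 0 ≤ ψ(x) ≤ M/x for all x > 0 (for some constant M) and ∫₀^∞ ψ(x) dx < ∞. Then there exists a constant A_ψ, depending only on M and ∫₀^∞ ψ(x) dx, such that for all a > 0 and b > 0: ∫₀ᵃ ψ(x)·ln₊(b/(a − x)) dx ≤ A_ψ·(1 + ln₊(b/a)). -/

import Mathlib

open Real MeasureTheory


lemma log_II' {a : ℝ} (ha : 0 < a) : IntervalIntegrable Real.log volume 0 a := by
  rw [intervalIntegrable_iff_integrableOn_Ioc_of_le ha.le]
  have hg : IntegrableOn (fun x : ℝ => 2 * x ^ (-(1/2) : ℝ) + |Real.log a|) (Set.Ioc 0 a) := by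
    apply Integrable.add
    · have h := (intervalIntegral.intervalIntegrable_rpow' (a := 0) (b := a)
        (r := -(1/2)) (by norm_num)).const_mul 2
      rwa [intervalIntegrable_iff_integrableOn_Ioc_of_le ha.le] at h
    · exact integrableOn_const measure_Ioc_lt_top.ne
  apply hg.mono' Real.measurable_log.aestronglyMeasurable
  filter_upwards [ae_restrict_mem measurableSet_Ioc] with x hx
  rw [Real.norm_eq_abs]
  have hrp : (0:ℝ) ≤ x ^ (-(1/2) : ℝ) := Real.rpow_nonneg hx.1.le _
  rcases le_or_gt x 1 with hx1 | hx1
  · have h1 : |Real.log x| = - Real.log x := abs_of_nonpos (Real.log_nonpos hx.1.le hx1)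
    have hs : (0:ℝ) < Real.sqrt x := Real.sqrt_pos.mpr hx.1
    have h2 : -Real.log x = 2 * Real.log (Real.sqrt x)⁻¹ := by
      rw [Real.log_inv, Real.log_sqrt hx.1.le]; ring
    have h4 : (Real.sqrt x)⁻¹ = x ^ (-(1/2):ℝ) := by
      rw [Real.sqrt_eq_rpow, ← Real.rpow_neg hx.1.le]
    have h3 : Real.log (Real.sqrt x)⁻¹ ≤ x ^ (-(1/2):ℝ) := by
      rw [← h4]
      exact (Real.log_le_sub_one_of_pos (by positivity)).trans (by linarith)
    rw [h1]
    have := abs_nonneg (Real.log a)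
    linarith [h2]
  · have h1 : |Real.log x| = Real.log x := abs_of_nonneg (Real.log_nonneg hx1.le)
    have h2 : Real.log x ≤ Real.log a := Real.log_le_log hx.1 hx.2
    have h3 : Real.log a ≤ |Real.log a| := le_abs_self _
    rw [h1]; linarith

lemma log_integral' {a : ℝ} (ha : 0 < a) :
    ∫ x in (0:ℝ)..a, Real.log x = a * Real.log a - a := by
  have h := intervalIntegral.integral_eq_sub_of_hasDeriv_right_of_le ha.le
    (f := fun x => x * Real.log x - x) (f' := Real.log)
    ((Real.continuous_mul_log.sub continuous_id).continuousOn)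
    (fun x hx => by
      have := (Real.hasDerivAt_mul_log hx.1.ne').sub (hasDerivAt_id x)
      simpa [Pi.sub_def] using this.hasDerivWithinAt)
    (log_II' ha)
  simpa using h


/-- Lemma A₁ of the Appendix: if `0 ≤ ψ(x) ≤ M/x` on `(0,∞)` and
`∫₀^∞ ψ < ∞`, then `∫₀^a ψ(x)·ln₊(b/(a-x)) dx ≤ A_ψ·(1 + ln₊(b/a))`,
with `A_ψ` depending only on `M` and `∫₀^∞ ψ`. -/
theorem stmt_18 (M I : ℝ) :
    ∃ Aψ : ℝ, ∀ ψ : ℝ → ℝ, Measurable ψ →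
      (∀ x : ℝ, 0 < x → 0 ≤ ψ x ∧ ψ x ≤ M/x) →
      IntegrableOn ψ (Set.Ioi (0:ℝ)) →
      (∫ x in Set.Ioi (0:ℝ), ψ x) = I →
      ∀ a b : ℝ, 0 < a → 0 < b →
        (∫ x in (0:ℝ)..a, ψ x * max (Real.log (b/(a-x))) 0)
          ≤ Aψ * (1 + max (Real.log (b/a)) 0) := by
  refine ⟨|I| + 2 * |M|, fun ψ hmeas hbound hint hI a b ha hb => ?_⟩
  set P := max (Real.log (b/a)) 0 with hPdef
  have hP : 0 ≤ P := le_max_right _ _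
  have hM : 0 ≤ M := by have h := hbound 1 one_pos; simpa using h.1.trans h.2
  have hc : 0 ≤ 2 * M / a := by positivity
  have hψIoc : IntegrableOn ψ (Set.Ioc 0 a) := hint.mono_set Set.Ioc_subset_Ioi_self
  have hne : ∀ᵐ x : ℝ, x ≠ a := by
    rw [ae_iff]
    simpa using (measure_singleton a : volume ({a} : Set ℝ) = 0)
  -- integrability of log (a - x)
  have hII2 : IntervalIntegrable (fun x => Real.log (a - x)) volume 0 a := by
    simpa using ((log_II' ha).comp_sub_left a).symm
  -- integrability of log (a/(a-x))
  have hg2 : IntervalIntegrable (fun x => Real.log (a/(a-x))) volume 0 a := by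
    have h1 : IntervalIntegrable (fun x => Real.log a - Real.log (a - x)) volume 0 a :=
      intervalIntegrable_const.sub hII2
    rw [intervalIntegrable_iff_integrableOn_Ioc_of_le ha.le] at h1 ⊢
    apply h1.congr
    filter_upwards [ae_restrict_of_ae hne] with x hx
    rw [Real.log_div ha.ne' (sub_ne_zero_of_ne fun h => hx h.symm)]
  -- value of the auxiliary integral
  have hval : ∫ x in (0:ℝ)..a, Real.log (a/(a-x)) = a := by
    have h0 : ∫ x in (0:ℝ)..a, Real.log (a/(a-x))
        = ∫ x in (0:ℝ)..a, (Real.log a - Real.log (a-x)) := by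
      apply intervalIntegral.integral_congr_ae
      filter_upwards [hne] with x hx _
      exact Real.log_div ha.ne' (sub_ne_zero_of_ne fun h => hx h.symm)
    have h2 : ∫ x in (0:ℝ)..a, Real.log (a-x) = ∫ x in (0:ℝ)..a, Real.log x := by
      simpa using intervalIntegral.integral_comp_sub_left (a := 0) (b := a) Real.log a
    rw [h0, intervalIntegral.integral_sub intervalIntegrable_const hII2,
      intervalIntegral.integral_const, h2, log_integral' ha]
    simp only [smul_eq_mul, sub_zero]
    ring
  set g : ℝ → ℝ := fun x => ψ x * (1 + P) + (2*M/a) * (P + Real.log (a/(a-x))) with hgdef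
  have h_c : IntegrableOn (fun x => (2*M/a) * (P + Real.log (a/(a-x)))) (Set.Ioc 0 a) := by
    have h := ((intervalIntegrable_const (c := P)).add hg2).const_mul (2*M/a)
    rwa [intervalIntegrable_iff_integrableOn_Ioc_of_le ha.le] at h
  have hgint : IntegrableOn g (Set.Ioc 0 a) := (hψIoc.mul_const _).add h_c
  have hae : ∀ᵐ x ∂(volume.restrict (Set.Ioc 0 a)), x ∈ Set.Ioo 0 a := by
    rw [Measure.restrict_congr_set MeasureTheory.Ioo_ae_eq_Ioc.symm]
    exact ae_restrict_mem measurableSet_Ioo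
  have hf0 : 0 ≤ᵐ[volume.restrict (Set.Ioc 0 a)]
      fun x => ψ x * max (Real.log (b/(a-x))) 0 := by
    filter_upwards [hae] with x hx
    exact mul_nonneg (hbound x hx.1).1 (le_max_right _ _)
  have hfg : (fun x => ψ x * max (Real.log (b/(a-x))) 0)
      ≤ᵐ[volume.restrict (Set.Ioc 0 a)] g := by
    filter_upwards [hae] with x hx
    obtain ⟨hx0, hxa⟩ := hx
    have ht0 : 0 < a - x := sub_pos.mpr hxa
    have hlogat : 0 ≤ Real.log (a/(a-x)) := by
      apply Real.log_nonneg
      rw [le_div_iff₀ ht0]; linarith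
    have hba : Real.log (b/a) ≤ P := le_max_left _ _
    rcases le_or_gt x (a/2) with hhalf | hhalf
    · have h1 : max (Real.log (b/(a-x))) 0 ≤ 1 + P := by
        apply max_le _ (by linarith)
        have hd : b/(a-x) ≤ b*2/a := by
          have h2 : b/(a-x) ≤ b/(a/2) :=
            div_le_div_of_nonneg_left hb.le (half_pos ha) (by linarith)
          have h3 : b/(a/2) = b*2/a := by
            rw [div_div_eq_mul_div]
          linarith
        have h4 : Real.log (b/(a-x)) ≤ Real.log (b*2/a) :=
          Real.log_le_log (by positivity) hd
        have h5 : Real.log (b*2/a) = Real.log 2 + Real.log (b/a) := by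
          rw [show b*2/a = 2*(b/a) by ring,
            Real.log_mul two_ne_zero (div_pos hb ha).ne']
        have h6 : Real.log 2 ≤ 1 := by
          have := Real.log_le_sub_one_of_pos (show (0:ℝ) < 2 by norm_num)
          linarith
        linarith
      have h2 : ψ x * max (Real.log (b/(a-x))) 0 ≤ ψ x * (1 + P) :=
        mul_le_mul_of_nonneg_left h1 (hbound x hx0).1
      have h3 : 0 ≤ (2*M/a) * (P + Real.log (a/(a-x))) :=
        mul_nonneg hc (by linarith)
      simp only [hgdef]; linarith
    · have hψle : ψ x ≤ 2*M/a := by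
        have h1 := (hbound x hx0).2
        have h2 : M/x ≤ M/(a/2) :=
          div_le_div_of_nonneg_left hM (half_pos ha) hhalf.le
        have h3 : M/(a/2) = 2*M/a := by rw [div_div_eq_mul_div]; ring
        linarith
      have h1 : max (Real.log (b/(a-x))) 0 ≤ P + Real.log (a/(a-x)) := by
        apply max_le _ (by linarith)
        have heq : b/(a-x) = (b/a)*(a/(a-x)) := by
          field_simp
        rw [heq, Real.log_mul (div_pos hb ha).ne' (div_pos ha ht0).ne']
        linarith
      have h2 : ψ x * max (Real.log (b/(a-x))) 0
          ≤ (2*M/a) * (P + Real.log (a/(a-x))) :=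
        mul_le_mul hψle h1 (le_max_right _ _) hc
      have h3 : 0 ≤ ψ x * (1 + P) := mul_nonneg (hbound x hx0).1 (by linarith)
      simp only [hgdef]; linarith
  have hψle : ∫ x in Set.Ioc 0 a, ψ x ≤ I := by
    rw [← hI]
    apply setIntegral_mono_set hint
    · filter_upwards [ae_restrict_mem measurableSet_Ioi] with x hx
      exact (hbound x hx).1
    · exact (Set.Ioc_subset_Ioi_self).eventuallyLE
  have hg_val : ∫ x in Set.Ioc 0 a, g x
      = (∫ x in Set.Ioc 0 a, ψ x) * (1 + P) + (2*M/a) * (a * P + a) := by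
    rw [hgdef]
    rw [integral_add (hψIoc.mul_const _) h_c, integral_mul_const, integral_const_mul]
    congr 1
    have : ∫ x in Set.Ioc 0 a, (P + Real.log (a/(a-x)))
        = ∫ x in (0:ℝ)..a, (P + Real.log (a/(a-x))) := by
      rw [intervalIntegral.integral_of_le ha.le]
    rw [this, intervalIntegral.integral_add intervalIntegrable_const hg2,
      intervalIntegral.integral_const, hval]
    simp [smul_eq_mul]
  have key : ∫ x in (0:ℝ)..a, ψ x * max (Real.log (b/(a-x))) 0
      ≤ (I + 2*M) * (1 + P) := by
    rw [intervalIntegral.integral_of_le ha.le]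
    calc ∫ x in Set.Ioc 0 a, ψ x * max (Real.log (b/(a-x))) 0
        ≤ ∫ x in Set.Ioc 0 a, g x := integral_mono_of_nonneg hf0 hgint hfg
      _ = (∫ x in Set.Ioc 0 a, ψ x) * (1 + P) + (2*M/a) * (a * P + a) := hg_val
      _ ≤ I * (1 + P) + (2*M/a) * (a * P + a) := by
          have := mul_le_mul_of_nonneg_right hψle (by linarith : (0:ℝ) ≤ 1 + P)
          linarith
      _ = (I + 2*M) * (1 + P) := by
          have ha2 : (2*M/a) * (a * P + a) = 2*M*(1+P) := by
            field_simp
            ring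
          rw [ha2]; ring
  have habs : (I + 2*M) * (1 + P) ≤ (|I| + 2*|M|) * (1 + P) := by
    have h1 := le_abs_self I
    have h2 := le_abs_self M
    have : I + 2*M ≤ |I| + 2*|M| := by linarith
    exact mul_le_mul_of_nonneg_right this (by linarith)
  linarith
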